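/- arXiv:1706.04767 — 4 statements merged into one kernel-verified Lean document; each statement's English description precedes it below -/
import Mathlib

section
/- For every nonnegative measurable functional H on E, every k ∈ ℤ and every t > 0, E[H(B^k Y) · 1{‖Y_{−k}‖ > t}] = t^{−α} · E[H(tY) · 1{‖Y_k‖ > 1/t}]. -/
open MeasureTheory ProbabilityTheory Set Filter
open scoped ENNReal NNReal Topology

noncomputable section

/-- The iterated backshift operator: `(B^k x) j = x (j - k)`. -/
def backshift {V : Type*} (k : ℤ) (x : ℤ → V) : ℤ → V := fun j => x (j - k)

namespace TimeChangeAux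

lemma backshift_backshift {V : Type*} (m n : ℤ) (x : ℤ → V) :
    backshift m (backshift n x) = backshift (n + m) x := by
  funext j; simp [backshift, sub_sub, add_comm]

lemma backshift_zero {V : Type*} : (backshift 0 : (ℤ → V) → ℤ → V) = id := by
  funext x j; simp [backshift]

lemma measurable_backshift {V : Type*} [MeasurableSpace V] (k : ℤ) :
    Measurable (backshift k : (ℤ → V) → ℤ → V) :=
  measurable_pi_lambda _ fun j => measurable_pi_apply (j - k)

lemma map_backshift {V : Type*} [MeasurableSpace V] (ν : Measure (ℤ → V))
    (h1 : ν.map (backshift 1) = ν) (k : ℤ) : ν.map (backshift k) = ν := by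
  have hneg : ν.map (backshift (-1)) = ν := by
    conv_lhs => rw [← h1]
    rw [Measure.map_map (measurable_backshift _) (measurable_backshift _)]
    have h : (backshift (-1) : (ℤ → V) → ℤ → V) ∘ backshift 1 = id := by
      funext x
      rw [Function.comp_apply, backshift_backshift]
      norm_num [backshift_zero]
    rw [h, Measure.map_id]
  induction k using Int.induction_on with
  | zero => rw [backshift_zero, Measure.map_id]
  | succ n ih =>
      have h : (backshift (n + 1) : (ℤ → V) → ℤ → V) = backshift n ∘ backshift 1 := by
        funext x
        rw [Function.comp_apply, backshift_backshift, add_comm]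
      rw [h, ← Measure.map_map (measurable_backshift _) (measurable_backshift _), h1, ih]
  | pred n ih =>
      have h : (backshift (-n - 1) : (ℤ → V) → ℤ → V) = backshift (-n) ∘ backshift (-1) := by
        funext x
        rw [Function.comp_apply, backshift_backshift, show ((-1 : ℤ) + -n) = -n - 1 by ring]
      rw [h, ← Measure.map_map (measurable_backshift _) (measurable_backshift _), hneg, ih]


def chi {V : Type*} [NormedAddCommGroup V] (j : ℤ) (s : ℝ) (y : ℤ → V) : ℝ≥0∞ :=
  if s < ‖y j‖ then 1 else 0

lemma measurable_chi {V : Type*} [NormedAddCommGroup V] [MeasurableSpace V]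
    [OpensMeasurableSpace V] (j : ℤ) (s : ℝ) : Measurable (chi (V := V) j s) :=
  Measurable.ite (measurableSet_lt measurable_const ((measurable_pi_apply j).norm))
    measurable_const measurable_const

lemma hset {β : Type*} [MeasurableSpace β] (μ : Measure β) (g : β → ℝ≥0∞)
    (s : Set β) (hs : MeasurableSet s) :
    ∫⁻ x in s, g x ∂μ = ∫⁻ x, g x * s.indicator 1 x ∂μ := by
  rw [← lintegral_indicator hs]
  refine lintegral_congr fun x => ?_
  by_cases h : x ∈ s <;> simp [h]

end TimeChangeAux

open TimeChangeAux

/-- **The time change formula for the tail process.**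
For every nonnegative measurable functional `H` on `E`, every `k ∈ ℤ` and every `t > 0`,
`E[H(B^k Y) · 1{‖Y_{−k}‖ > t}] = t^{−α} · E[H(tY) · 1{‖Y_k‖ > 1/t}]`. -/
theorem statement0
    -- `V` plays the role of `ℝ^d` (`d ≥ 1`) equipped with an arbitrary norm
    {V : Type*} [NormedAddCommGroup V] [NormedSpace ℝ V] [FiniteDimensional ℝ V]
    [Nontrivial V] [MeasurableSpace V] [BorelSpace V]
    (α : ℝ) (hα : 0 < α)
    -- the tail measure and its properties
    (ν : Measure (ℤ → V))
    (hν0 : ν {0} = 0)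
    (hν1 : ν {y : ℤ → V | 1 < ‖y 0‖} = 1)
    (hνshift : ν.map (backshift 1) = ν)
    (hνhom : ∀ A : Set (ℤ → V), MeasurableSet A → ∀ c : ℝ, 0 < c →
      ν ((fun x => c • x) '' A) = ENNReal.ofReal (c ^ (-α)) * ν A)
    -- the tail process `Y` and the spectral tail process `Θ`
    {Ω : Type*} [MeasurableSpace Ω] (P : Measure Ω) [IsProbabilityMeasure P]
    (Y : Ω → ℤ → V) (hYmeas : Measurable Y)
    (hYlaw : P.map Y = ν.restrict {y : ℤ → V | 1 < ‖y 0‖})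
    (Θ : Ω → ℤ → V) (hΘdef : ∀ ω, Θ ω = ‖Y ω 0‖⁻¹ • Y ω)
    (hPareto : ∀ u : ℝ, 1 ≤ u → P {ω | u < ‖Y ω 0‖} = ENNReal.ofReal (u ^ (-α)))
    (hindep : IndepFun (fun ω => ‖Y ω 0‖) Θ P)
    (hpolar : ∀ H : (ℤ → V) → ℝ≥0∞, Measurable H →
      ∫⁻ y in {y : ℤ → V | y 0 ≠ 0}, H y ∂ν
        = ∫⁻ r in Ioi (0 : ℝ),
            (∫⁻ ω, H (r • Θ ω) ∂P) * ENNReal.ofReal (α * r ^ (-α - 1)))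
    -- the statement
    (H : (ℤ → V) → ℝ≥0∞) (hH : Measurable H) (k : ℤ) (t : ℝ) (ht : 0 < t) :
    ∫⁻ ω in {ω | t < ‖Y ω (-k)‖}, H (backshift k (Y ω)) ∂P
      = ENNReal.ofReal (t ^ (-α)) *
          ∫⁻ ω in {ω | 1 / t < ‖Y ω k‖}, H (t • Y ω) ∂P := by
  classical
  have hsm : ∀ (j : ℤ) (s : ℝ), MeasurableSet {y : ℤ → V | s < ‖y j‖} := fun j s =>
    measurableSet_lt measurable_const ((measurable_pi_apply j).norm)
  -- scaling of the measure
  have hsmulmeas : ∀ c : ℝ, Measurable (fun x : ℤ → V => c • x) := fun c =>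
    measurable_pi_lambda _ fun j => (measurable_pi_apply j).const_smul c
  have hmap_smul : ∀ c : ℝ, 0 < c →
      ν.map (fun x : ℤ → V => c • x) = ENNReal.ofReal (c ^ α) • ν := by
    intro c hc
    ext A hA
    have hpre : (fun x : ℤ → V => c • x) ⁻¹' A = (fun x : ℤ → V => c⁻¹ • x) '' A := by
      ext x
      simp only [mem_preimage, mem_image]
      constructor
      · intro h
        exact ⟨c • x, h, by rw [smul_smul, inv_mul_cancel₀ hc.ne', one_smul]⟩
      · rintro ⟨a, ha, rfl⟩
        rwa [smul_smul, mul_inv_cancel₀ hc.ne', one_smul]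
    rw [Measure.map_apply (hsmulmeas c) hA, hpre, hνhom A hA c⁻¹ (inv_pos.mpr hc),
      Real.inv_rpow hc.le, Real.rpow_neg hc.le, inv_inv, Measure.smul_apply, smul_eq_mul]
  have hlint_smul : ∀ (f : (ℤ → V) → ℝ≥0∞), Measurable f → ∀ c : ℝ, 0 < c →
      ∫⁻ y, f (c • y) ∂ν = ENNReal.ofReal (c ^ α) * ∫⁻ y, f y ∂ν := by
    intro f hf c hc
    rw [← lintegral_map hf (hsmulmeas c), hmap_smul c hc, lintegral_smul_measure, smul_eq_mul]
  have hlint_shift : ∀ (f : (ℤ → V) → ℝ≥0∞), Measurable f →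
      ∫⁻ y, f (backshift k y) ∂ν = ∫⁻ y, f y ∂ν := by
    intro f hf
    conv_rhs => rw [← map_backshift ν hνshift k]
    rw [lintegral_map hf (measurable_backshift k)]
  have hfmeas : Measurable (fun y : ℤ → V => H y * chi 0 t y * chi k 1 y) :=
    (hH.mul (measurable_chi 0 t)).mul (measurable_chi k 1)
  have hF1meas : Measurable fun y : ℤ → V => H (backshift k y) * chi (-k) t y :=
    (hH.comp (measurable_backshift k)).mul (measurable_chi _ _)
  have hGmeas : Measurable fun y : ℤ → V => H (t • y) * chi k (1/t) y :=
    (hH.comp (hsmulmeas t)).mul (measurable_chi _ _)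
  -- Step 1: express the LHS as an integral against ν
  have hLHS : ∫⁻ ω in {ω | t < ‖Y ω (-k)‖}, H (backshift k (Y ω)) ∂P
      = ∫⁻ y, H y * chi 0 t y * chi k 1 y ∂ν := by
    calc ∫⁻ ω in {ω | t < ‖Y ω (-k)‖}, H (backshift k (Y ω)) ∂P
        = ∫⁻ ω in Y ⁻¹' {y : ℤ → V | t < ‖y (-k)‖}, H (backshift k (Y ω)) ∂P := rfl
      _ = ∫⁻ ω, H (backshift k (Y ω)) * (Y ⁻¹' {y : ℤ → V | t < ‖y (-k)‖}).indicator 1 ω ∂P :=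
          hset P _ _ (hYmeas (hsm (-k) t))
      _ = ∫⁻ ω, (fun y => H (backshift k y) * chi (-k) t y) (Y ω) ∂P := by
          refine lintegral_congr fun ω => ?_
          by_cases h : t < ‖Y ω (-k)‖ <;> simp [chi, h, Set.indicator_apply]
      _ = ∫⁻ y, H (backshift k y) * chi (-k) t y ∂(P.map Y) := (lintegral_map hF1meas hYmeas).symm
      _ = ∫⁻ y in {y : ℤ → V | 1 < ‖y 0‖}, H (backshift k y) * chi (-k) t y ∂ν := by rw [hYlaw]
      _ = ∫⁻ y, H (backshift k y) * chi (-k) t y * ({y : ℤ → V | 1 < ‖y 0‖}).indicator 1 y ∂ν :=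
          hset (β := ℤ → V) ν (fun y => H (backshift k y) * chi (-k) t y) _ (hsm 0 1)
      _ = ∫⁻ y, (fun y => H y * chi 0 t y * chi k 1 y) (backshift k y) ∂ν := by
          refine lintegral_congr fun y => ?_
          have e0 : backshift k y 0 = y (-k) := by simp [backshift]
          have ek : backshift k y k = y 0 := by simp [backshift]
          by_cases h : (1:ℝ) < ‖y 0‖ <;> simp [chi, e0, ek, h, Set.indicator_apply]
      _ = ∫⁻ y, H y * chi 0 t y * chi k 1 y ∂ν := hlint_shift _ hfmeas
  -- Step 2: scaling
  have hiff2 : ∀ x : ℝ, 1 < t * x ↔ 1 / t < x := by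
    intro x
    rw [div_lt_iff₀ ht, mul_comm]
  have hscale : ∫⁻ y, H y * chi 0 t y * chi k 1 y ∂ν
      = ENNReal.ofReal (t ^ (-α)) * ∫⁻ y, H (t • y) * chi 0 1 y * chi k (1/t) y ∂ν := by
    have key := hlint_smul _ hfmeas t ht
    have hpt : ∀ y : ℤ → V, (fun y => H y * chi 0 t y * chi k 1 y) (t • y)
        = H (t • y) * chi 0 1 y * chi k (1/t) y := by
      intro y
      have h0 : ‖(t • y) 0‖ = t * ‖y 0‖ := by
        simp [Pi.smul_apply, norm_smul, abs_of_pos ht]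
      have hk : ‖(t • y) k‖ = t * ‖y k‖ := by
        simp [Pi.smul_apply, norm_smul, abs_of_pos ht]
      simp only [chi, h0, hk]
      rw [if_congr (lt_mul_iff_one_lt_right ht) rfl rfl, if_congr (hiff2 _) rfl rfl]
    have key2 : ∫⁻ y, H (t • y) * chi 0 1 y * chi k (1/t) y ∂ν
        = ENNReal.ofReal (t ^ α) * ∫⁻ y, H y * chi 0 t y * chi k 1 y ∂ν := by
      rw [← key]
      exact lintegral_congr fun y => (hpt y).symm
    rw [key2, ← mul_assoc, ← ENNReal.ofReal_mul (Real.rpow_nonneg ht.le _),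
      ← Real.rpow_add ht, neg_add_cancel, Real.rpow_zero, ENNReal.ofReal_one, one_mul]
  -- Step 3: express back as an integral against P
  have hRHS : ∫⁻ y, H (t • y) * chi 0 1 y * chi k (1/t) y ∂ν
      = ∫⁻ ω in {ω | 1 / t < ‖Y ω k‖}, H (t • Y ω) ∂P := by
    calc ∫⁻ y, H (t • y) * chi 0 1 y * chi k (1/t) y ∂ν
        = ∫⁻ y, H (t • y) * chi k (1/t) y * ({y : ℤ → V | 1 < ‖y 0‖}).indicator 1 y ∂ν := by
          refine lintegral_congr fun y => ?_
          by_cases h : (1:ℝ) < ‖y 0‖ <;> simp [chi, h, Set.indicator_apply] <;> ring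
      _ = ∫⁻ y in {y : ℤ → V | 1 < ‖y 0‖}, H (t • y) * chi k (1/t) y ∂ν :=
          (hset ν _ _ (hsm 0 1)).symm
      _ = ∫⁻ y, H (t • y) * chi k (1/t) y ∂(P.map Y) := by rw [hYlaw]
      _ = ∫⁻ ω, H (t • Y ω) * chi k (1/t) (Y ω) ∂P := lintegral_map hGmeas hYmeas
      _ = ∫⁻ ω, H (t • Y ω) * (Y ⁻¹' {y : ℤ → V | 1/t < ‖y k‖}).indicator 1 ω ∂P := by
          refine lintegral_congr fun ω => ?_
          by_cases h : 1/t < ‖Y ω k‖ <;> simp [chi, h, Set.indicator_apply]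
      _ = ∫⁻ ω in Y ⁻¹' {y : ℤ → V | 1/t < ‖y k‖}, H (t • Y ω) ∂P :=
          (hset (β := Ω) P (fun ω => H (t • Y ω)) _ (hYmeas (hsm k (1/t)))).symm
      _ = ∫⁻ ω in {ω | 1 / t < ‖Y ω k‖}, H (t • Y ω) ∂P := rfl
  rw [hLHS, hscale, hRHS]

end
end

section
/- The following two families of identities are equivalent: (a) for every nonnegative measurable functional H on E, every k ∈ ℤ and every t > 0, E[H(B^k Y) · 1{‖Y_{−k}‖ > t}] = t^{−α} E[H(tY) · 1{‖Y_k‖ > 1/t}]; (b) for every nonnegative measurable functional H on E and every k ∈ ℤ, E[H(B^k Θ) · 1{‖Θ_{−k}‖ ≠ 0}] = E[H(‖Θ_k‖^{−1} Θ) · ‖Θ_k‖^α], where the quantity inside the expectation on the right hand side is understood to be 0 when ‖Θ_k‖ = 0. -/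
open MeasureTheory ProbabilityTheory Set Filter
open scoped ENNReal NNReal Topology

noncomputable section

section aux

lemma rpow_anti' {α : ℝ} (hα : 0 < α) {x y : ℝ} (hx : 0 < x) (hxy : x ≤ y) :
    y ^ (-α) ≤ x ^ (-α) := by
  rw [Real.rpow_neg hx.le, Real.rpow_neg (hx.trans_le hxy).le]
  exact inv_anti₀ (Real.rpow_pos_of_pos hx α) (Real.rpow_le_rpow hx.le hxy hα.le)

lemma inv_rpow_neg' {α c : ℝ} (hc : 0 < c) : (c⁻¹ : ℝ) ^ (-α) = c ^ α := by
  rw [Real.inv_rpow hc.le, Real.rpow_neg hc.le, inv_inv]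

lemma key_real' (α : ℝ) (hα : 0 < α) {c t : ℝ} (hc : 0 < c) (ht : 0 < t) (a : ℝ) :
    c ^ α * min 1 (max (c * a) (t * c) ^ (-α))
      = t ^ (-α) * min 1 (max (a / t) (1 / (t * c)) ^ (-α)) := by
  have hca : max (c * a) (t * c) = c * max a t := by
    rw [mul_comm t c, ← mul_max_of_nonneg _ _ hc.le]
  have hat : max (a / t) (1 / (t * c)) = (max a c⁻¹) / t := by
    rw [show (1:ℝ)/(t*c) = c⁻¹/t by field_simp [mul_comm], max_div_div_right ht.le]
  have hmt : 0 < max a t := lt_max_of_lt_right ht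
  have hmc : 0 < max a c⁻¹ := lt_max_of_lt_right (inv_pos.mpr hc)
  have h1 : c ^ α * (c * max a t) ^ (-α) = (max a t) ^ (-α) := by
    rw [Real.mul_rpow hc.le hmt.le, ← mul_assoc, ← Real.rpow_add hc, add_neg_cancel,
      Real.rpow_zero, one_mul]
  have h2 : t ^ (-α) * ((max a c⁻¹) / t) ^ (-α) = (max a c⁻¹) ^ (-α) := by
    rw [Real.div_rpow hmc.le ht.le, div_eq_mul_inv, ← mul_assoc, mul_comm (t ^ (-α)),
      mul_assoc, mul_inv_cancel₀ (Real.rpow_pos_of_pos ht _).ne', mul_one]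
  rw [hca, hat, mul_min_of_nonneg _ _ (Real.rpow_pos_of_pos hc α).le,
    mul_min_of_nonneg _ _ (Real.rpow_pos_of_pos ht _).le, mul_one, mul_one, h1, h2]
  have hcpos := inv_pos.mpr hc
  rcases le_total a t with h₁ | h₁ <;> rcases le_total a c⁻¹ with h₂ | h₂
  · rw [max_eq_right h₁, max_eq_right h₂, inv_rpow_neg' hc, min_comm]
  · rw [max_eq_right h₁, max_eq_left h₂]
    have e1 : t ^ (-α) ≤ a ^ (-α) := rpow_anti' hα (hcpos.trans_le h₂) h₁
    have e2 : a ^ (-α) ≤ c ^ α := by rw [← inv_rpow_neg' hc]; exact rpow_anti' hα hcpos h₂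
    rw [min_eq_right (e1.trans e2), min_eq_left e1]
  · rw [max_eq_left h₁, max_eq_right h₂]
    have ha : 0 < a := ht.trans_le h₁
    have e1 : c ^ α ≤ a ^ (-α) := by rw [← inv_rpow_neg' hc]; exact rpow_anti' hα ha h₂
    have e2 : c ^ α ≤ t ^ (-α) := by rw [← inv_rpow_neg' hc]; exact rpow_anti' hα ht (h₁.trans h₂)
    rw [min_eq_left e1, inv_rpow_neg' hc, min_eq_right e2]
  · rw [max_eq_left h₁, max_eq_left h₂]
    have ha : 0 < a := ht.trans_le h₁
    have e1 : a ^ (-α) ≤ c ^ α := by rw [← inv_rpow_neg' hc]; exact rpow_anti' hα hcpos h₂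
    have e2 : a ^ (-α) ≤ t ^ (-α) := rpow_anti' hα ht h₁
    rw [min_eq_right e1, min_eq_right e2]

lemma ofReal_min_one' (z : ℝ) : min 1 (ENNReal.ofReal z) = ENNReal.ofReal (min 1 z) := by
  rw [← ENNReal.ofReal_one, (Monotone.map_min (fun x y h => ENNReal.ofReal_le_ofReal h)).symm]

lemma indicator_eq_indicator' {A B : Type*} {SA : Set A} {SB : Set B} {f : A → ℝ≥0∞}
    {g : B → ℝ≥0∞} {a : A} {b : B} (hmem : a ∈ SA ↔ b ∈ SB)
    (hval : a ∈ SA → f a = g b) : SA.indicator f a = SB.indicator g b := by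
  by_cases h : a ∈ SA
  · rw [Set.indicator_of_mem h, Set.indicator_of_mem (hmem.mp h)]; exact hval h
  · rw [Set.indicator_of_notMem h, Set.indicator_of_notMem (fun hb => h (hmem.mpr hb))]

lemma key_scaling' (α : ℝ) (hα : 0 < α) (ν : Measure ℝ) [IsProbabilityMeasure ν]
    (htail : ∀ m : ℝ, 0 < m → ν (Ioi m) = min 1 (ENNReal.ofReal (m ^ (-α))))
    {c t : ℝ} (hc : 0 < c) (ht : 0 < t) (f : ℝ → ℝ≥0∞) (hf : Measurable f) :
    ENNReal.ofReal (c ^ α) * ∫⁻ r in Ioi (t * c), f (c⁻¹ * r) ∂ν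
      = ENNReal.ofReal (t ^ (-α)) * ∫⁻ r in Ioi (1 / (t * c)), f (t * r) ∂ν := by
  have htc : 0 < t * c := mul_pos ht hc
  set κ₁ : Measure ℝ :=
    ENNReal.ofReal (c ^ α) • ((ν.restrict (Ioi (t * c))).map fun r => c⁻¹ * r) with hκ₁
  set κ₂ : Measure ℝ :=
    ENNReal.ofReal (t ^ (-α)) • ((ν.restrict (Ioi (1 / (t * c)))).map fun r => t * r) with hκ₂
  have hm1 : Measurable fun r : ℝ => c⁻¹ * r := measurable_const_mul _
  have hm2 : Measurable fun r : ℝ => t * r := measurable_const_mul _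
  have hpre1 : ∀ a : ℝ, (fun r : ℝ => c⁻¹ * r) ⁻¹' (Ioi a) = Ioi (c * a) := by
    intro a; ext r
    simp only [mem_preimage, mem_Ioi, ← div_eq_inv_mul, lt_div_iff₀ hc]
    rw [mul_comm]
  have hpre2 : ∀ a : ℝ, (fun r : ℝ => t * r) ⁻¹' (Ioi a) = Ioi (a / t) := by
    intro a; ext r
    simp only [mem_preimage, mem_Ioi, div_lt_iff₀ ht]
    rw [mul_comm]
  have hIoi : ∀ a : ℝ, κ₁ (Ioi a) = κ₂ (Ioi a) := by
    intro a
    rw [hκ₁, hκ₂]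
    simp only [Measure.smul_apply, smul_eq_mul,
      Measure.map_apply hm1 measurableSet_Ioi, Measure.map_apply hm2 measurableSet_Ioi,
      hpre1 a, hpre2 a, Measure.restrict_apply measurableSet_Ioi, Ioi_inter_Ioi]
    rw [htail _ (lt_max_of_lt_right htc), htail _ (lt_max_of_lt_right (by positivity)),
      ofReal_min_one', ofReal_min_one', ← ENNReal.ofReal_mul (Real.rpow_pos_of_pos hc α).le,
      ← ENNReal.ofReal_mul (Real.rpow_pos_of_pos ht (-α)).le]
    exact congrArg ENNReal.ofReal (key_real' α hα hc ht a)
  have hκ₁univ : κ₁ univ = ENNReal.ofReal (c ^ α) * ν (Ioi (t * c)) := by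
    rw [hκ₁, Measure.smul_apply, smul_eq_mul, Measure.map_apply hm1 MeasurableSet.univ,
      preimage_univ, Measure.restrict_apply MeasurableSet.univ, univ_inter]
  have hκ₂univ : κ₂ univ = ENNReal.ofReal (t ^ (-α)) * ν (Ioi (1 / (t * c))) := by
    rw [hκ₂, Measure.smul_apply, smul_eq_mul, Measure.map_apply hm2 MeasurableSet.univ,
      preimage_univ, Measure.restrict_apply MeasurableSet.univ, univ_inter]
  have huniv : κ₁ univ = κ₂ univ := by
    rw [hκ₁univ, hκ₂univ, htail _ htc, htail _ (by positivity : (0:ℝ) < 1 / (t * c)),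
      ofReal_min_one', ofReal_min_one', ← ENNReal.ofReal_mul (Real.rpow_pos_of_pos hc α).le,
      ← ENNReal.ofReal_mul (Real.rpow_pos_of_pos ht (-α)).le]
    refine congrArg ENNReal.ofReal ?_
    have := key_real' α hα hc ht 0
    rwa [mul_zero, zero_div, max_eq_right htc.le,
      max_eq_right (by positivity : (0:ℝ) ≤ 1/(t*c))] at this
  haveI hfin1 : IsFiniteMeasure κ₁ := by
    constructor
    rw [hκ₁univ]
    exact ENNReal.mul_lt_top ENNReal.ofReal_lt_top (measure_lt_top ν _)
  haveI hfin2 : IsFiniteMeasure κ₂ := by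
    constructor
    rw [hκ₂univ]
    exact ENNReal.mul_lt_top ENNReal.ofReal_lt_top (measure_lt_top ν _)
  have hκ : κ₁ = κ₂ := by
    refine Measure.ext_of_Iic κ₁ κ₂ fun a => ?_
    rw [← compl_Ioi, measure_compl measurableSet_Ioi (measure_ne_top κ₁ _),
      measure_compl measurableSet_Ioi (measure_ne_top κ₂ _), huniv, hIoi a]
  have e1 : ∫⁻ x, f x ∂κ₁ = ENNReal.ofReal (c ^ α) * ∫⁻ r in Ioi (t * c), f (c⁻¹ * r) ∂ν := by
    rw [hκ₁, lintegral_smul_measure, lintegral_map hf hm1, smul_eq_mul]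
  have e2 : ∫⁻ x, f x ∂κ₂
      = ENNReal.ofReal (t ^ (-α)) * ∫⁻ r in Ioi (1 / (t * c)), f (t * r) ∂ν := by
    rw [hκ₂, lintegral_smul_measure, lintegral_map hf hm2, smul_eq_mul]
  rw [← e1, ← e2, hκ]

end aux

/-- **Equivalence of the two formulations of the time change formula.**
With `Y = R·Θ`, `R` Pareto(α) independent of `Θ` and `‖Θ_0‖ = 1` a.s., the family of
identities `E[H(B^k Y)·1{‖Y_{−k}‖>t}] = t^{−α} E[H(tY)·1{‖Y_k‖>1/t}]` (all nonnegative
measurable `H`, all `k ∈ ℤ`, `t > 0`) is equivalent to the family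
`E[H(B^k Θ)·1{‖Θ_{−k}‖≠0}] = E[H(‖Θ_k‖⁻¹Θ)·‖Θ_k‖^α]` (all nonnegative measurable `H`,
all `k ∈ ℤ`), the right-hand side integrand being `0` when `‖Θ_k‖ = 0`. -/
theorem statement1
    -- `V` plays the role of `ℝ^d` (`d ≥ 1`) equipped with an arbitrary norm
    {V : Type*} [NormedAddCommGroup V] [NormedSpace ℝ V] [FiniteDimensional ℝ V]
    [Nontrivial V] [MeasurableSpace V] [BorelSpace V]
    (α : ℝ) (hα : 0 < α)
    {Ω : Type*} [MeasurableSpace Ω] (P : Measure Ω) [IsProbabilityMeasure P]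
    (Θ : Ω → ℤ → V) (hΘmeas : Measurable Θ)
    (hΘ0 : ∀ᵐ ω ∂P, ‖Θ ω 0‖ = 1)
    (R : Ω → ℝ) (hRmeas : Measurable R)
    (hPareto : ∀ u : ℝ, 1 ≤ u → P {ω | u < R ω} = ENNReal.ofReal (u ^ (-α)))
    (hindep : IndepFun R Θ P)
    (Y : Ω → ℤ → V) (hYdef : ∀ ω, Y ω = R ω • Θ ω) :
    (∀ H : (ℤ → V) → ℝ≥0∞, Measurable H → ∀ k : ℤ, ∀ t : ℝ, 0 < t →
        ∫⁻ ω in {ω | t < ‖Y ω (-k)‖}, H (backshift k (Y ω)) ∂P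
          = ENNReal.ofReal (t ^ (-α)) *
              ∫⁻ ω in {ω | 1 / t < ‖Y ω k‖}, H (t • Y ω) ∂P)
      ↔
    (∀ H : (ℤ → V) → ℝ≥0∞, Measurable H → ∀ k : ℤ,
        ∫⁻ ω in {ω | ‖Θ ω (-k)‖ ≠ 0}, H (backshift k (Θ ω)) ∂P
          = ∫⁻ ω, H (‖Θ ω k‖⁻¹ • Θ ω) * ENNReal.ofReal (‖Θ ω k‖ ^ α) ∂P) := by
  classical
  have mnorm : ∀ k : ℤ, Measurable fun x : ℤ → V => ‖x k‖ := fun k =>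
    (measurable_pi_apply k).norm
  have msmul : Measurable fun p : ℝ × (ℤ → V) => p.1 • p.2 :=
    measurable_pi_lambda _ fun j => measurable_fst.smul ((measurable_pi_apply j).comp measurable_snd)
  have mb : ∀ k : ℤ, Measurable (backshift (V := V) k) := fun k =>
    measurable_pi_lambda _ fun j => measurable_pi_apply (j - k)
  have mnormalize : ∀ k : ℤ, Measurable fun x : ℤ → V => ‖x k‖⁻¹ • x := fun k =>
    msmul.comp (((mnorm k).inv).prodMk measurable_id)
  have mrpow : Measurable fun d : ℝ => ENNReal.ofReal (d ^ α) :=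
    ENNReal.measurable_ofReal.comp (Real.continuous_rpow_const hα.le).measurable
  have hYmeas : Measurable Y := by
    have hY : Y = fun ω => R ω • Θ ω := funext hYdef
    rw [hY]; exact msmul.comp (hRmeas.prodMk hΘmeas)
  set μ := P.map Θ with hμdef
  set ν := P.map R with hνdef
  haveI : IsProbabilityMeasure μ := Measure.isProbabilityMeasure_map hΘmeas.aemeasurable
  haveI : IsProbabilityMeasure ν := Measure.isProbabilityMeasure_map hRmeas.aemeasurable
  have hprod : P.map (fun ω => (Θ ω, R ω)) = μ.prod ν :=
    (indepFun_iff_map_prod_eq_prod_map_map hΘmeas.aemeasurable hRmeas.aemeasurable).mp hindep.symm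
  have hT : ∀ F : (ℤ → V) × ℝ → ℝ≥0∞, Measurable F →
      ∫⁻ ω, F (Θ ω, R ω) ∂P = ∫⁻ x, ∫⁻ r, F (x, r) ∂ν ∂μ := by
    intro F hF
    rw [← lintegral_map hF (hΘmeas.prodMk hRmeas), hprod, lintegral_prod _ hF.aemeasurable]
  have h1 : P {ω | 1 < R ω} = 1 := by
    rw [hPareto 1 le_rfl, Real.one_rpow, ENNReal.ofReal_one]
  have hR1 : ∀ᵐ ω ∂P, 1 < R ω := by
    rw [ae_iff]
    exact (prob_compl_eq_zero_iff (measurableSet_lt measurable_const hRmeas)).mpr h1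
  have hμ0 : ∀ᵐ x ∂μ, ‖x 0‖ = 1 :=
    (ae_map_iff hΘmeas.aemeasurable ((mnorm 0) (measurableSet_singleton 1))).mpr hΘ0
  have htail : ∀ m : ℝ, 0 < m → ν (Ioi m) = min 1 (ENNReal.ofReal (m ^ (-α))) := by
    intro m hm
    have happ : ν (Ioi m) = P {ω | m < R ω} := by
      rw [hνdef, Measure.map_apply hRmeas measurableSet_Ioi]; rfl
    rcases le_or_gt 1 m with h | h
    · rw [happ, hPareto m h, min_eq_right]
      exact ENNReal.ofReal_le_one.mpr
        (Real.rpow_le_one_of_one_le_of_nonpos h (neg_nonpos.mpr hα.le))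
    · have hub : ν (Ioi m) ≤ 1 := prob_le_one
      have hlb : (1 : ℝ≥0∞) ≤ ν (Ioi m) := by
        rw [happ, ← h1]
        exact measure_mono fun ω hω => lt_trans h hω
      rw [le_antisymm hub hlb, min_eq_left]
      exact ENNReal.one_le_ofReal.mpr
        (Real.one_le_rpow_of_pos_of_le_one_of_nonpos hm h.le (neg_nonpos.mpr hα.le))
  have hSk : ∀ k : ℤ, MeasurableSet {x : ℤ → V | ‖x (-k)‖ ≠ 0} := fun k =>
    ((mnorm (-k)) (measurableSet_singleton 0)).compl
  constructor
  · -- (a) → (b)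
    intro ha H hH k
    have HmBS : Measurable fun x : ℤ → V => H (backshift k x) := hH.comp (mb k)
    have HmN : Measurable fun x : ℤ → V => H (‖x k‖⁻¹ • x) := hH.comp (mnormalize k)
    have EqT : ∀ t : ℝ, 0 < t →
        ∫⁻ x, H (backshift k x) * min 1 (ENNReal.ofReal ((‖x (-k)‖ / t) ^ α)) ∂μ
          = ∫⁻ x, H (‖x k‖⁻¹ • x)
              * min (ENNReal.ofReal (t ^ (-α))) (ENNReal.ofReal (‖x k‖ ^ α)) ∂μ := by
      intro t ht
      have hS₁ : MeasurableSet {ω | t < ‖Y ω (-k)‖} :=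
        measurableSet_lt measurable_const ((measurable_pi_apply (-k)).comp hYmeas).norm
      have hS₂ : MeasurableSet {ω | 1 / t < ‖Y ω k‖} :=
        measurableSet_lt measurable_const ((measurable_pi_apply k).comp hYmeas).norm
      have hspec : ∫⁻ ω in {ω | t < ‖Y ω (-k)‖},
            H (‖(backshift k (Y ω)) k‖⁻¹ • backshift k (Y ω)) ∂P
          = ENNReal.ofReal (t ^ (-α)) * ∫⁻ ω in {ω | 1 / t < ‖Y ω k‖},
              H (‖(t • Y ω) k‖⁻¹ • (t • Y ω)) ∂P :=
        ha (fun y => H (‖y k‖⁻¹ • y)) HmN k t ht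
      have hsetq₁ : MeasurableSet {q : (ℤ → V) × ℝ | t < q.2 * ‖q.1 (-k)‖} :=
        measurableSet_lt measurable_const (measurable_snd.mul ((mnorm (-k)).comp measurable_fst))
      have mF₁ : Measurable (({q : (ℤ → V) × ℝ | t < q.2 * ‖q.1 (-k)‖}).indicator
          fun q => H (backshift k q.1)) := (HmBS.comp measurable_fst).indicator hsetq₁
      have LHS1 : ∫⁻ ω in {ω | t < ‖Y ω (-k)‖},
            H (‖(backshift k (Y ω)) k‖⁻¹ • backshift k (Y ω)) ∂P
          = ∫⁻ x, H (backshift k x) * min 1 (ENNReal.ofReal ((‖x (-k)‖ / t) ^ α)) ∂μ := by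
        rw [← lintegral_indicator hS₁]
        have step1 : ∫⁻ ω, ({ω | t < ‖Y ω (-k)‖}).indicator
              (fun ω => H (‖(backshift k (Y ω)) k‖⁻¹ • backshift k (Y ω))) ω ∂P
            = ∫⁻ ω, ({q : (ℤ → V) × ℝ | t < q.2 * ‖q.1 (-k)‖}).indicator
              (fun q => H (backshift k q.1)) (Θ ω, R ω) ∂P := by
          refine lintegral_congr_ae ?_
          filter_upwards [hR1, hΘ0] with ω hRω hΘω
          have hR0 : (0:ℝ) < R ω := lt_trans one_pos hRω
          have hYn : ∀ j, Y ω j = R ω • Θ ω j := fun j => by rw [hYdef]; rfl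
          refine indicator_eq_indicator' ?_ ?_
          · show t < ‖Y ω (-k)‖ ↔ t < R ω * ‖Θ ω (-k)‖
            rw [hYn (-k), norm_smul, Real.norm_eq_abs, abs_of_pos hR0]
          · intro _
            have hbs : backshift k (Y ω) = R ω • backshift k (Θ ω) := by
              funext j; simpa [backshift] using hYn (j - k)
            have hnorm : ‖(R ω • backshift k (Θ ω)) k‖ = R ω := by
              have hbk : (backshift k (Θ ω)) k = Θ ω 0 := by simp [backshift]
              rw [Pi.smul_apply, hbk, norm_smul, Real.norm_eq_abs, abs_of_pos hR0, hΘω, mul_one]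
            rw [hbs, hnorm, smul_smul, inv_mul_cancel₀ hR0.ne', one_smul]
        rw [step1, hT _ mF₁]
        refine lintegral_congr fun x => ?_
        have hinner : ∀ r : ℝ, ({q : (ℤ → V) × ℝ | t < q.2 * ‖q.1 (-k)‖}).indicator
              (fun q => H (backshift k q.1)) (x, r)
            = ({r : ℝ | t < r * ‖x (-k)‖}).indicator (fun _ => H (backshift k x)) r := by
          intro r
          simp only [Set.indicator_apply, mem_setOf_eq]
        have hms : MeasurableSet {r : ℝ | t < r * ‖x (-k)‖} :=
          measurableSet_lt measurable_const (measurable_mul_const _)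
        rw [lintegral_congr hinner, lintegral_indicator_const hms]
        rcases (norm_nonneg (x (-k))).eq_or_lt with hd | hd
        · have hempty : {r : ℝ | t < r * ‖x (-k)‖} = ∅ := by
            ext r
            simp only [mem_setOf_eq, mem_empty_iff_false, iff_false, not_lt, ← hd, mul_zero]
            exact ht.le
          rw [hempty, measure_empty, mul_zero, ← hd, zero_div,
            Real.zero_rpow hα.ne', ENNReal.ofReal_zero, min_eq_right zero_le, mul_zero]
        · have hset : {r : ℝ | t < r * ‖x (-k)‖} = Ioi (t / ‖x (-k)‖) := by
            ext r
            simp only [mem_setOf_eq, mem_Ioi, div_lt_iff₀ hd]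
          have hrw : (t / ‖x (-k)‖) ^ (-α) = (‖x (-k)‖ / t) ^ α := by
            rw [Real.rpow_neg (div_pos ht hd).le, ← Real.inv_rpow (div_pos ht hd).le, inv_div]
          rw [hset, htail _ (div_pos ht hd), hrw]
      have hsetq₂ : MeasurableSet {q : (ℤ → V) × ℝ | 1 / t < q.2 * ‖q.1 k‖} :=
        measurableSet_lt measurable_const (measurable_snd.mul ((mnorm k).comp measurable_fst))
      have mF₂ : Measurable (({q : (ℤ → V) × ℝ | 1 / t < q.2 * ‖q.1 k‖}).indicator
          fun q => H (‖q.1 k‖⁻¹ • q.1)) := (HmN.comp measurable_fst).indicator hsetq₂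
      have RHS1 : ENNReal.ofReal (t ^ (-α)) * ∫⁻ ω in {ω | 1 / t < ‖Y ω k‖},
            H (‖(t • Y ω) k‖⁻¹ • (t • Y ω)) ∂P
          = ∫⁻ x, H (‖x k‖⁻¹ • x)
              * min (ENNReal.ofReal (t ^ (-α))) (ENNReal.ofReal (‖x k‖ ^ α)) ∂μ := by
        rw [← lintegral_indicator hS₂]
        have step1 : ∫⁻ ω, ({ω | 1 / t < ‖Y ω k‖}).indicator
              (fun ω => H (‖(t • Y ω) k‖⁻¹ • (t • Y ω))) ω ∂P
            = ∫⁻ ω, ({q : (ℤ → V) × ℝ | 1 / t < q.2 * ‖q.1 k‖}).indicator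
              (fun q => H (‖q.1 k‖⁻¹ • q.1)) (Θ ω, R ω) ∂P := by
          refine lintegral_congr_ae ?_
          filter_upwards [hR1] with ω hRω
          have hR0 : (0:ℝ) < R ω := lt_trans one_pos hRω
          have hYn : ∀ j, Y ω j = R ω • Θ ω j := fun j => by rw [hYdef]; rfl
          refine indicator_eq_indicator' ?_ ?_
          · show 1 / t < ‖Y ω k‖ ↔ 1 / t < R ω * ‖Θ ω k‖
            rw [hYn k, norm_smul, Real.norm_eq_abs, abs_of_pos hR0]
          · intro hmem
            have hcond : 1 / t < ‖Y ω k‖ := hmem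
            have hd : (0:ℝ) < ‖Θ ω k‖ := by
              by_contra hcon
              push_neg at hcon
              have h0 : ‖Θ ω k‖ = 0 := le_antisymm hcon (norm_nonneg _)
              rw [hYn k, norm_smul, h0, mul_zero] at hcond
              exact absurd hcond (not_lt.mpr (by positivity))
            have htR : (0:ℝ) < t * R ω := mul_pos ht hR0
            have htY : t • Y ω = (t * R ω) • Θ ω := by
              funext j
              rw [Pi.smul_apply, Pi.smul_apply, hYn j, smul_smul]
            have hnorm : ‖((t * R ω) • Θ ω) k‖ = (t * R ω) * ‖Θ ω k‖ := by
              rw [Pi.smul_apply, norm_smul, Real.norm_eq_abs, abs_of_pos htR]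
            rw [htY, hnorm, smul_smul]
            congr 2
            field_simp
        rw [step1, hT _ mF₂, ← lintegral_const_mul' _ _ ENNReal.ofReal_ne_top]
        refine lintegral_congr fun x => ?_
        have hinner : ∀ r : ℝ, ({q : (ℤ → V) × ℝ | 1 / t < q.2 * ‖q.1 k‖}).indicator
              (fun q => H (‖q.1 k‖⁻¹ • q.1)) (x, r)
            = ({r : ℝ | 1 / t < r * ‖x k‖}).indicator (fun _ => H (‖x k‖⁻¹ • x)) r := by
          intro r
          simp only [Set.indicator_apply, mem_setOf_eq]
        have hms : MeasurableSet {r : ℝ | 1 / t < r * ‖x k‖} :=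
          measurableSet_lt measurable_const (measurable_mul_const _)
        rw [lintegral_congr hinner, lintegral_indicator_const hms]
        rcases (norm_nonneg (x k)).eq_or_lt with hd | hd
        · have hempty : {r : ℝ | 1 / t < r * ‖x k‖} = ∅ := by
            ext r
            simp only [mem_setOf_eq, mem_empty_iff_false, iff_false, not_lt, ← hd, mul_zero]
            positivity
          rw [hempty, measure_empty, mul_zero, mul_zero, ← hd, Real.zero_rpow hα.ne',
            ENNReal.ofReal_zero, min_eq_right zero_le, mul_zero]
        · have htd : (0:ℝ) < t * ‖x k‖ := mul_pos ht hd
          have hset : {r : ℝ | 1 / t < r * ‖x k‖} = Ioi (1 / (t * ‖x k‖)) := by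
            ext r
            simp only [mem_setOf_eq, mem_Ioi]
            rw [← div_div, div_lt_iff₀ hd]
          have hrw : (1 / (t * ‖x k‖)) ^ (-α) = (t * ‖x k‖) ^ α := by
            rw [one_div, Real.inv_rpow htd.le, Real.rpow_neg htd.le, inv_inv]
          rw [hset, htail _ (by positivity), hrw]
          rw [mul_left_comm]
          congr 1
          have hreal : t ^ (-α) * min 1 ((t * ‖x k‖) ^ α) = min (t ^ (-α)) (‖x k‖ ^ α) := by
            rw [mul_min_of_nonneg _ _ (Real.rpow_pos_of_pos ht _).le, mul_one,
              Real.mul_rpow ht.le hd.le, ← mul_assoc, ← Real.rpow_add ht, neg_add_cancel,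
              Real.rpow_zero, one_mul]
          rw [ofReal_min_one', ← ENNReal.ofReal_mul (Real.rpow_pos_of_pos ht (-α)).le, hreal,
            Monotone.map_min (fun a b h => ENNReal.ofReal_le_ofReal h)]
      rw [LHS1, RHS1] at hspec
      exact hspec
    -- monotone convergence as t ↓ 0
    have hfg : ∀ n : ℕ,
        ∫⁻ x, H (backshift k x) * min 1 (ENNReal.ofReal ((‖x (-k)‖ * ((n:ℝ)+1)) ^ α)) ∂μ
          = ∫⁻ x, H (‖x k‖⁻¹ • x)
              * min (ENNReal.ofReal (((n:ℝ)+1) ^ α)) (ENNReal.ofReal (‖x k‖ ^ α)) ∂μ := by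
      intro n
      have hn1 : (0:ℝ) < (n:ℝ)+1 := by positivity
      have h := EqT ((n:ℝ)+1)⁻¹ (by positivity)
      simp only [div_eq_mul_inv, inv_inv, inv_rpow_neg' hn1] at h
      exact h
    have htendL : Tendsto (fun n : ℕ =>
          ∫⁻ x, H (backshift k x) * min 1 (ENNReal.ofReal ((‖x (-k)‖ * ((n:ℝ)+1)) ^ α)) ∂μ)
        atTop (𝓝 (∫⁻ x, ({x : ℤ → V | ‖x (-k)‖ ≠ 0}).indicator
          (fun x => H (backshift k x)) x ∂μ)) := by
      refine lintegral_tendsto_of_tendsto_of_monotone (fun n => ?_) (ae_of_all _ ?_) (ae_of_all _ ?_)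
      · exact (HmBS.mul (measurable_const.min
          (mrpow.comp ((mnorm (-k)).mul_const _)))).aemeasurable
      · intro x m n hmn
        refine mul_le_mul_right (min_le_min le_rfl (ENNReal.ofReal_le_ofReal
          (Real.rpow_le_rpow (by positivity) ?_ hα.le))) _
        have hc : (m:ℝ) ≤ (n:ℝ) := Nat.cast_le.mpr hmn
        nlinarith [norm_nonneg (x (-k))]
      · intro x
        by_cases hd : ‖x (-k)‖ = 0
        · have hx : x ∉ {x : ℤ → V | ‖x (-k)‖ ≠ 0} := fun hcon => hcon hd
          rw [Set.indicator_of_notMem hx]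
          have hzero : ∀ n : ℕ, H (backshift k x)
              * min 1 (ENNReal.ofReal ((‖x (-k)‖ * ((n:ℝ)+1)) ^ α)) = 0 := by
            intro n
            rw [hd, zero_mul, Real.zero_rpow hα.ne', ENNReal.ofReal_zero,
              min_eq_right zero_le, mul_zero]
          simp only [hzero]
          exact tendsto_const_nhds
        · have hd' : 0 < ‖x (-k)‖ := (norm_nonneg _).lt_of_ne (Ne.symm hd)
          obtain ⟨N, hN⟩ := exists_nat_ge (‖x (-k)‖)⁻¹
          rw [Set.indicator_of_mem (show x ∈ {x : ℤ → V | ‖x (-k)‖ ≠ 0} from hd)]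
          refine tendsto_atTop_of_eventually_const (i₀ := N) fun n hn => ?_
          have hle : (‖x (-k)‖)⁻¹ ≤ (n:ℝ)+1 :=
            hN.trans (le_trans (Nat.cast_le.mpr hn) (lt_add_one (n:ℝ)).le)
          have h1 : 1 ≤ ‖x (-k)‖ * ((n:ℝ)+1) := by
            have h2 := mul_le_mul_of_nonneg_left hle hd'.le
            rwa [mul_inv_cancel₀ hd] at h2
          have hmin : min 1 (ENNReal.ofReal ((‖x (-k)‖ * ((n:ℝ)+1)) ^ α)) = 1 := by
            refine min_eq_left (ENNReal.one_le_ofReal.mpr ?_)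
            calc (1:ℝ) = 1 ^ α := (Real.one_rpow α).symm
            _ ≤ _ := Real.rpow_le_rpow zero_le_one h1 hα.le
          rw [hmin, mul_one]
    have htendR : Tendsto (fun n : ℕ =>
          ∫⁻ x, H (‖x k‖⁻¹ • x)
            * min (ENNReal.ofReal (((n:ℝ)+1) ^ α)) (ENNReal.ofReal (‖x k‖ ^ α)) ∂μ)
        atTop (𝓝 (∫⁻ x, H (‖x k‖⁻¹ • x) * ENNReal.ofReal (‖x k‖ ^ α) ∂μ)) := by
      refine lintegral_tendsto_of_tendsto_of_monotone (fun n => ?_) (ae_of_all _ ?_) (ae_of_all _ ?_)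
      · exact (HmN.mul (measurable_const.min (mrpow.comp (mnorm k)))).aemeasurable
      · intro x m n hmn
        refine mul_le_mul_right (min_le_min (ENNReal.ofReal_le_ofReal
          (Real.rpow_le_rpow (by positivity) ?_ hα.le)) le_rfl) _
        have hc : (m:ℝ) ≤ (n:ℝ) := Nat.cast_le.mpr hmn
        linarith
      · intro x
        obtain ⟨N, hN⟩ := exists_nat_ge ‖x k‖
        refine tendsto_atTop_of_eventually_const (i₀ := N) fun n hn => ?_
        have hle : ‖x k‖ ≤ (n:ℝ)+1 :=
          hN.trans (le_trans (Nat.cast_le.mpr hn) (lt_add_one (n:ℝ)).le)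
        rw [min_eq_right (ENNReal.ofReal_le_ofReal
          (Real.rpow_le_rpow (norm_nonneg _) hle hα.le))]
    have hlim : ∫⁻ x, ({x : ℤ → V | ‖x (-k)‖ ≠ 0}).indicator (fun x => H (backshift k x)) x ∂μ
        = ∫⁻ x, H (‖x k‖⁻¹ • x) * ENNReal.ofReal (‖x k‖ ^ α) ∂μ :=
      tendsto_nhds_unique (htendL.congr hfg) htendR
    have hmapL : ∫⁻ x in {x : ℤ → V | ‖x (-k)‖ ≠ 0}, H (backshift k x) ∂μ
        = ∫⁻ ω in {ω | ‖Θ ω (-k)‖ ≠ 0}, H (backshift k (Θ ω)) ∂P :=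
      setLIntegral_map (hSk k) HmBS hΘmeas
    have hmapR : ∫⁻ x, H (‖x k‖⁻¹ • x) * ENNReal.ofReal (‖x k‖ ^ α) ∂μ
        = ∫⁻ ω, H (‖Θ ω k‖⁻¹ • Θ ω) * ENNReal.ofReal (‖Θ ω k‖ ^ α) ∂P :=
      lintegral_map (HmN.mul (mrpow.comp (mnorm k))) hΘmeas
    rw [← hmapL, ← hmapR, ← lintegral_indicator (hSk k)]
    exact hlim
  · -- (b) → (a)
    intro hb H hH k t ht
    have hbμ : ∀ H' : (ℤ → V) → ℝ≥0∞, Measurable H' → ∀ k' : ℤ,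
        ∫⁻ x in {x : ℤ → V | ‖x (-k')‖ ≠ 0}, H' (backshift k' x) ∂μ
          = ∫⁻ x, H' (‖x k'‖⁻¹ • x) * ENNReal.ofReal (‖x k'‖ ^ α) ∂μ := by
      intro H' hH' k'
      have hmapL : ∫⁻ x in {x : ℤ → V | ‖x (-k')‖ ≠ 0}, H' (backshift k' x) ∂μ
          = ∫⁻ ω in {ω | ‖Θ ω (-k')‖ ≠ 0}, H' (backshift k' (Θ ω)) ∂P :=
        setLIntegral_map (hSk k') (hH'.comp (mb k')) hΘmeas
      have hmapR : ∫⁻ x, H' (‖x k'‖⁻¹ • x) * ENNReal.ofReal (‖x k'‖ ^ α) ∂μ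
          = ∫⁻ ω, H' (‖Θ ω k'‖⁻¹ • Θ ω) * ENNReal.ofReal (‖Θ ω k'‖ ^ α) ∂P :=
        lintegral_map ((hH'.comp (mnormalize k')).mul (mrpow.comp (mnorm k'))) hΘmeas
      rw [hmapL, hmapR]
      exact hb H' hH' k'
    have hS₁ : MeasurableSet {ω | t < ‖Y ω (-k)‖} :=
      measurableSet_lt measurable_const ((measurable_pi_apply (-k)).comp hYmeas).norm
    have hS₂ : MeasurableSet {ω | 1 / t < ‖Y ω k‖} :=
      measurableSet_lt measurable_const ((measurable_pi_apply k).comp hYmeas).norm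
    have hsetq : MeasurableSet {q : (ℤ → V) × ℝ | t < q.2 * ‖q.1 0‖} :=
      measurableSet_lt measurable_const (measurable_snd.mul ((mnorm 0).comp measurable_fst))
    have mq : Measurable fun q : (ℤ → V) × ℝ => H (q.2 • q.1) :=
      hH.comp (msmul.comp (measurable_snd.prodMk measurable_fst))
    have mG : Measurable fun y : ℤ → V =>
        ∫⁻ r, ({q : (ℤ → V) × ℝ | t < q.2 * ‖q.1 0‖}).indicator
          (fun q => H (q.2 • q.1)) (y, r) ∂ν :=
      (mq.indicator hsetq).lintegral_prod_right'
    have hLHS : ∫⁻ ω in {ω | t < ‖Y ω (-k)‖}, H (backshift k (Y ω)) ∂P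
        = ∫⁻ x, (∫⁻ r, ({q : (ℤ → V) × ℝ | t < q.2 * ‖q.1 0‖}).indicator
            (fun q => H (q.2 • q.1)) (‖x k‖⁻¹ • x, r) ∂ν) * ENNReal.ofReal (‖x k‖ ^ α) ∂μ := by
      have mF₃ : Measurable (({q : (ℤ → V) × ℝ | t < q.2 * ‖q.1 (-k)‖}).indicator
          fun q => H (q.2 • backshift k q.1)) :=
        (hH.comp (msmul.comp (measurable_snd.prodMk ((mb k).comp measurable_fst)))).indicator
          (measurableSet_lt measurable_const (measurable_snd.mul ((mnorm (-k)).comp measurable_fst)))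
      have step1 : ∫⁻ ω in {ω | t < ‖Y ω (-k)‖}, H (backshift k (Y ω)) ∂P
          = ∫⁻ ω, ({q : (ℤ → V) × ℝ | t < q.2 * ‖q.1 (-k)‖}).indicator
              (fun q => H (q.2 • backshift k q.1)) (Θ ω, R ω) ∂P := by
        rw [← lintegral_indicator hS₁]
        refine lintegral_congr_ae ?_
        filter_upwards [hR1] with ω hRω
        have hR0 : (0:ℝ) < R ω := lt_trans one_pos hRω
        have hYn : ∀ j, Y ω j = R ω • Θ ω j := fun j => by rw [hYdef]; rfl
        refine indicator_eq_indicator' ?_ ?_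
        · show t < ‖Y ω (-k)‖ ↔ t < R ω * ‖Θ ω (-k)‖
          rw [hYn (-k), norm_smul, Real.norm_eq_abs, abs_of_pos hR0]
        · intro _
          show H (backshift k (Y ω)) = H (R ω • backshift k (Θ ω))
          congr 1
          funext j
          simpa [backshift] using hYn (j - k)
      have step2 : ∫⁻ ω, ({q : (ℤ → V) × ℝ | t < q.2 * ‖q.1 (-k)‖}).indicator
            (fun q => H (q.2 • backshift k q.1)) (Θ ω, R ω) ∂P
          = ∫⁻ x, (∫⁻ r, ({q : (ℤ → V) × ℝ | t < q.2 * ‖q.1 0‖}).indicator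
              (fun q => H (q.2 • q.1)) (backshift k x, r) ∂ν) ∂μ := by
        rw [hT _ mF₃]
        refine lintegral_congr fun x => ?_
        refine lintegral_congr fun r => ?_
        refine indicator_eq_indicator' ?_ ?_
        · show t < r * ‖x (-k)‖ ↔ t < r * ‖(backshift k x) 0‖
          have h0 : (backshift k x) 0 = x (-k) := by simp [backshift]
          rw [h0]
        · intro _; rfl
      have step3 : ∫⁻ x, (∫⁻ r, ({q : (ℤ → V) × ℝ | t < q.2 * ‖q.1 0‖}).indicator
            (fun q => H (q.2 • q.1)) (backshift k x, r) ∂ν) ∂μ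
          = ∫⁻ x in {x : ℤ → V | ‖x (-k)‖ ≠ 0}, (∫⁻ r,
              ({q : (ℤ → V) × ℝ | t < q.2 * ‖q.1 0‖}).indicator
              (fun q => H (q.2 • q.1)) (backshift k x, r) ∂ν) ∂μ := by
        rw [← lintegral_indicator (hSk k)]
        refine lintegral_congr fun x => ?_
        by_cases hx : ‖x (-k)‖ = 0
        · rw [Set.indicator_of_notMem
            (show x ∉ {x : ℤ → V | ‖x (-k)‖ ≠ 0} from fun hcon => hcon hx) _]
          have hzero : ∀ r : ℝ, ({q : (ℤ → V) × ℝ | t < q.2 * ‖q.1 0‖}).indicator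
              (fun q => H (q.2 • q.1)) (backshift k x, r) = 0 := by
            intro r
            refine Set.indicator_of_notMem ?_ _
            show ¬ t < r * ‖(backshift k x) 0‖
            have h0 : (backshift k x) 0 = x (-k) := by simp [backshift]
            rw [h0, hx, mul_zero]
            exact not_lt.mpr ht.le
          rw [lintegral_congr hzero, lintegral_zero]
        · rw [Set.indicator_of_mem (show x ∈ {x : ℤ → V | ‖x (-k)‖ ≠ 0} from hx)
            (fun x => ∫⁻ r, ({q : (ℤ → V) × ℝ | t < q.2 * ‖q.1 0‖}).indicator
              (fun q => H (q.2 • q.1)) (backshift k x, r) ∂ν)]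
      rw [step1, step2, step3]
      exact hbμ _ mG k
    have hRHS : ENNReal.ofReal (t ^ (-α)) * ∫⁻ ω in {ω | 1 / t < ‖Y ω k‖}, H (t • Y ω) ∂P
        = ∫⁻ x, (∫⁻ r, ({q : (ℤ → V) × ℝ | t < q.2 * ‖q.1 0‖}).indicator
            (fun q => H (q.2 • q.1)) (‖x k‖⁻¹ • x, r) ∂ν) * ENNReal.ofReal (‖x k‖ ^ α) ∂μ := by
      have mF₄ : Measurable (({q : (ℤ → V) × ℝ | 1 / t < q.2 * ‖q.1 k‖}).indicator
          fun q => H ((t * q.2) • q.1)) :=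
        (hH.comp (msmul.comp ((measurable_snd.const_mul t).prodMk measurable_fst))).indicator
          (measurableSet_lt measurable_const (measurable_snd.mul ((mnorm k).comp measurable_fst)))
      have step1 : ∫⁻ ω in {ω | 1 / t < ‖Y ω k‖}, H (t • Y ω) ∂P
          = ∫⁻ ω, ({q : (ℤ → V) × ℝ | 1 / t < q.2 * ‖q.1 k‖}).indicator
              (fun q => H ((t * q.2) • q.1)) (Θ ω, R ω) ∂P := by
        rw [← lintegral_indicator hS₂]
        refine lintegral_congr_ae ?_
        filter_upwards [hR1] with ω hRω
        have hR0 : (0:ℝ) < R ω := lt_trans one_pos hRω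
        have hYn : ∀ j, Y ω j = R ω • Θ ω j := fun j => by rw [hYdef]; rfl
        refine indicator_eq_indicator' ?_ ?_
        · show 1 / t < ‖Y ω k‖ ↔ 1 / t < R ω * ‖Θ ω k‖
          rw [hYn k, norm_smul, Real.norm_eq_abs, abs_of_pos hR0]
        · intro _
          show H (t • Y ω) = H ((t * R ω) • Θ ω)
          congr 1
          funext j
          rw [Pi.smul_apply, Pi.smul_apply, hYn j, smul_smul]
      have hptwise : ∀ᵐ x ∂μ, (∫⁻ r, ({q : (ℤ → V) × ℝ | t < q.2 * ‖q.1 0‖}).indicator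
            (fun q => H (q.2 • q.1)) (‖x k‖⁻¹ • x, r) ∂ν) * ENNReal.ofReal (‖x k‖ ^ α)
          = ENNReal.ofReal (t ^ (-α)) * ∫⁻ r,
              ({q : (ℤ → V) × ℝ | 1 / t < q.2 * ‖q.1 k‖}).indicator
              (fun q => H ((t * q.2) • q.1)) (x, r) ∂ν := by
        filter_upwards [hμ0] with x hx0
        by_cases hc : ‖x k‖ = 0
        · have hzero : ∀ r : ℝ, ({q : (ℤ → V) × ℝ | 1 / t < q.2 * ‖q.1 k‖}).indicator
              (fun q => H ((t * q.2) • q.1)) (x, r) = 0 := by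
            intro r
            refine Set.indicator_of_notMem ?_ _
            show ¬ 1 / t < r * ‖x k‖
            rw [hc, mul_zero]
            exact not_lt.mpr (by positivity)
          rw [hc, Real.zero_rpow hα.ne', ENNReal.ofReal_zero, mul_zero,
            lintegral_congr hzero, lintegral_zero, mul_zero]
        · have hc' : 0 < ‖x k‖ := (norm_nonneg _).lt_of_ne (Ne.symm hc)
          have mf₀ : Measurable fun s : ℝ => H (s • x) :=
            hH.comp (msmul.comp (measurable_id.prodMk measurable_const))
          have hG1 : ∫⁻ r, ({q : (ℤ → V) × ℝ | t < q.2 * ‖q.1 0‖}).indicator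
                (fun q => H (q.2 • q.1)) (‖x k‖⁻¹ • x, r) ∂ν
              = ∫⁻ r in Ioi (t * ‖x k‖), H ((‖x k‖⁻¹ * r) • x) ∂ν := by
            rw [← lintegral_indicator measurableSet_Ioi]
            refine lintegral_congr fun r => ?_
            refine indicator_eq_indicator' ?_ ?_
            · show t < r * ‖(‖x k‖⁻¹ • x) 0‖ ↔ r ∈ Ioi (t * ‖x k‖)
              have hn0 : ‖(‖x k‖⁻¹ • x) 0‖ = ‖x k‖⁻¹ := by
                rw [Pi.smul_apply, norm_smul, Real.norm_eq_abs,
                  abs_of_pos (inv_pos.mpr hc'), hx0, mul_one]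
              rw [mem_Ioi, hn0, ← div_eq_mul_inv, lt_div_iff₀ hc']
            · intro _
              show H (r • ‖x k‖⁻¹ • x) = H ((‖x k‖⁻¹ * r) • x)
              rw [smul_smul, mul_comm]
          have hF4 : ∫⁻ r, ({q : (ℤ → V) × ℝ | 1 / t < q.2 * ‖q.1 k‖}).indicator
                (fun q => H ((t * q.2) • q.1)) (x, r) ∂ν
              = ∫⁻ r in Ioi (1 / (t * ‖x k‖)), H ((t * r) • x) ∂ν := by
            rw [← lintegral_indicator measurableSet_Ioi]
            refine lintegral_congr fun r => ?_
            refine indicator_eq_indicator' ?_ ?_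
            · show 1 / t < r * ‖x k‖ ↔ r ∈ Ioi (1 / (t * ‖x k‖))
              rw [mem_Ioi, ← div_div, div_lt_iff₀ hc']
            · intro _; rfl
          rw [hG1, hF4, mul_comm]
          exact key_scaling' α hα ν htail hc' ht (fun s => H (s • x)) mf₀
      rw [step1, hT _ mF₄, ← lintegral_const_mul' _ _ ENNReal.ofReal_ne_top]
      exact (lintegral_congr_ae hptwise).symm
    rw [hLHS]
    exact hRHS.symm
end
end

section
/- Let A ⊆ E be a measurable set which is shift invariant (x ∈ A if and only if Bx ∈ A) and homogeneous (x ∈ A implies tx ∈ A for all t > 0). Then ν(A) ∈ {0, ∞}, and the following statements are equivalent: (i) ν(A) = 0; (ii) P(Y ∈ A) = 0; (iii) P(Θ ∈ A) = 0. -/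
open MeasureTheory ProbabilityTheory Set Filter
open scoped ENNReal NNReal Topology

noncomputable section

lemma backshift_meas {V : Type*} [MeasurableSpace V] (k : ℤ) :
    Measurable (backshift (V := V) k) :=
  measurable_pi_lambda _ fun _ => measurable_pi_apply _

lemma backshift_comp {V : Type*} (k l : ℤ) (x : ℤ → V) :
    backshift k (backshift l x) = backshift (k + l) x := by
  funext j; simp [backshift, sub_sub]

lemma backshift_zero {V : Type*} (x : ℤ → V) : backshift 0 x = x := by
  funext j; simp [backshift]

/-- **Zero-infinity law for shift invariant homogeneous sets.**
If `A` is a measurable, shift invariant and homogeneous subset of `E`, then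
`ν(A) ∈ {0, ∞}`, and `ν(A) = 0 ↔ P(Y ∈ A) = 0 ↔ P(Θ ∈ A) = 0`. -/
theorem statement2
    -- `V` plays the role of `ℝ^d` (`d ≥ 1`) equipped with an arbitrary norm
    {V : Type*} [NormedAddCommGroup V] [NormedSpace ℝ V] [FiniteDimensional ℝ V]
    [Nontrivial V] [MeasurableSpace V] [BorelSpace V]
    (α : ℝ) (hα : 0 < α)
    -- the tail measure and its properties
    (ν : Measure (ℤ → V))
    (hν0 : ν {0} = 0)
    (hν1 : ν {y : ℤ → V | 1 < ‖y 0‖} = 1)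
    (hνshift : ν.map (backshift 1) = ν)
    (hνhom : ∀ A : Set (ℤ → V), MeasurableSet A → ∀ c : ℝ, 0 < c →
      ν ((fun x => c • x) '' A) = ENNReal.ofReal (c ^ (-α)) * ν A)
    -- the tail process `Y` and the spectral tail process `Θ`
    {Ω : Type*} [MeasurableSpace Ω] (P : Measure Ω) [IsProbabilityMeasure P]
    (Y : Ω → ℤ → V) (hYmeas : Measurable Y)
    (hYlaw : P.map Y = ν.restrict {y : ℤ → V | 1 < ‖y 0‖})
    (Θ : Ω → ℤ → V) (hΘdef : ∀ ω, Θ ω = ‖Y ω 0‖⁻¹ • Y ω)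
    (hPareto : ∀ u : ℝ, 1 ≤ u → P {ω | u < ‖Y ω 0‖} = ENNReal.ofReal (u ^ (-α)))
    (hindep : IndepFun (fun ω => ‖Y ω 0‖) Θ P)
    (hpolar : ∀ H : (ℤ → V) → ℝ≥0∞, Measurable H →
      ∫⁻ y in {y : ℤ → V | y 0 ≠ 0}, H y ∂ν
        = ∫⁻ r in Ioi (0 : ℝ),
            (∫⁻ ω, H (r • Θ ω) ∂P) * ENNReal.ofReal (α * r ^ (-α - 1)))
    -- the statement
    (A : Set (ℤ → V)) (hAmeas : MeasurableSet A)
    (hAshift : ∀ x, x ∈ A ↔ backshift 1 x ∈ A)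
    (hAhom : ∀ x ∈ A, ∀ t : ℝ, 0 < t → t • x ∈ A) :
    (ν A = 0 ∨ ν A = ∞) ∧
      (ν A = 0 ↔ P (Y ⁻¹' A) = 0) ∧
      (P (Y ⁻¹' A) = 0 ↔ P (Θ ⁻¹' A) = 0) := by
  -- basic measurability
  set S : Set (ℤ → V) := {y : ℤ → V | 1 < ‖y 0‖} with hSdef
  have hSmeas : MeasurableSet S :=
    measurableSet_lt measurable_const (measurable_pi_apply 0).norm
  have hAiff : ∀ t : ℝ, 0 < t → ∀ x, x ∈ A ↔ t • x ∈ A := by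
    intro t ht x
    constructor
    · exact fun hx => hAhom x hx t ht
    · intro hx
      have := hAhom _ hx t⁻¹ (inv_pos.mpr ht)
      rwa [inv_smul_smul₀ ht.ne'] at this
  -- shift invariance of ν for all k
  have hmapN : ∀ n : ℕ, ν.map (backshift (n : ℤ)) = ν := by
    intro n
    induction n with
    | zero => simp only [Nat.cast_zero]
              have : backshift (V := V) 0 = id := funext backshift_zero
              rw [this, Measure.map_id]
    | succ n ih =>
      have hc : backshift (V := V) ((n : ℤ)) ∘ backshift 1 = backshift ((n : ℤ) + 1) := by
        funext x; simp [Function.comp, backshift_comp]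
      calc ν.map (backshift ((n : ℕ) + 1 : ℕ)) = ν.map (backshift ((n : ℤ) + 1)) := by
            norm_cast
        _ = ν.map (backshift (V := V) ((n : ℤ)) ∘ backshift 1) := by rw [hc]
        _ = (ν.map (backshift 1)).map (backshift (n : ℤ)) :=
            (Measure.map_map (backshift_meas _) (backshift_meas _)).symm
        _ = ν := by rw [hνshift, ih]
  have hmapk : ∀ k : ℤ, ν.map (backshift k) = ν := by
    intro k
    obtain ⟨n, rfl | rfl⟩ := Int.eq_nat_or_neg k
    · exact hmapN n
    · have hc : backshift (V := V) (-(n : ℤ)) ∘ backshift (n : ℤ) = backshift 0 := by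
        funext x; simp [Function.comp, backshift_comp]
      have hid : backshift (V := V) 0 = id := funext backshift_zero
      calc ν.map (backshift (-(n : ℤ))) = (ν.map (backshift (n : ℤ))).map (backshift (-(n : ℤ))) := by
            rw [hmapN n]
        _ = ν.map (backshift (V := V) (-(n : ℤ)) ∘ backshift (n : ℤ)) :=
            Measure.map_map (backshift_meas _) (backshift_meas _)
        _ = ν := by rw [hc, hid, Measure.map_id]
  -- shift invariance of A for all k
  have hAstep : ∀ (k : ℤ) (x : ℤ → V), (x ∈ A ↔ backshift k x ∈ A) →
      (x ∈ A ↔ backshift (k + 1) x ∈ A) := by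
    intro k x h
    rw [h, hAshift (backshift k x), backshift_comp, add_comm]
  have hAk : ∀ (k : ℤ) (x : ℤ → V), x ∈ A ↔ backshift k x ∈ A := by
    intro k
    induction k using Int.induction_on with
    | zero => intro x; rw [backshift_zero]
    | succ n ih => intro x; exact hAstep _ _ (ih x)
    | pred n ih =>
      intro x
      have h1 := hAshift (backshift (-(n : ℤ) - 1) x)
      rw [backshift_comp] at h1
      have : (1 : ℤ) + (-(n : ℤ) - 1) = -(n : ℤ) := by ring
      rw [this] at h1
      exact (ih x).trans h1.symm
  -- law of Y
  have hPYA : P (Y ⁻¹' A) = ν (A ∩ S) := by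
    rw [← Measure.map_apply hYmeas hAmeas, hYlaw, Measure.restrict_apply hAmeas]
  -- scaling of A ∩ S
  have himg : ∀ c : ℝ, 0 < c →
      (fun x : ℤ → V => c • x) '' (A ∩ S) = A ∩ {y : ℤ → V | c < ‖y 0‖} := by
    intro c hc
    ext x
    constructor
    · rintro ⟨y, ⟨hyA, hy0⟩, rfl⟩
      refine ⟨hAhom y hyA c hc, ?_⟩
      have hy0' : 1 < ‖y 0‖ := hy0
      show c < ‖(c • y) 0‖
      rw [Pi.smul_apply, norm_smul, Real.norm_eq_abs, abs_of_pos hc]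
      nlinarith
    · rintro ⟨hxA, hx0⟩
      have hx0' : c < ‖x 0‖ := hx0
      refine ⟨c⁻¹ • x, ⟨hAhom x hxA c⁻¹ (inv_pos.mpr hc), ?_⟩, smul_inv_smul₀ hc.ne' x⟩
      show 1 < ‖(c⁻¹ • x) 0‖
      rw [Pi.smul_apply, norm_smul, Real.norm_eq_abs, abs_of_pos (inv_pos.mpr hc)]
      rw [← inv_mul_cancel₀ hc.ne']
      exact mul_lt_mul_of_pos_left hx0' (inv_pos.mpr hc)
  have hscale : ∀ c : ℝ, 0 < c →
      ν (A ∩ {y : ℤ → V | c < ‖y 0‖}) = ENNReal.ofReal (c ^ (-α)) * ν (A ∩ S) := by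
    intro c hc
    rw [← himg c hc, hνhom _ (hAmeas.inter hSmeas) c hc]
  have hZmeas : MeasurableSet {y : ℤ → V | y 0 ≠ 0} :=
    ((measurable_pi_apply 0) (measurableSet_singleton 0)).compl
  -- key: ν(A ∩ S) = 0 → ν A = 0
  have key : ν (A ∩ S) = 0 → ν A = 0 := by
    intro h0
    have h1 : ∀ c : ℝ, 0 < c → ν (A ∩ {y : ℤ → V | c < ‖y 0‖}) = 0 := by
      intro c hc; rw [hscale c hc, h0, mul_zero]
    have h2 : ν (A ∩ {y : ℤ → V | y 0 ≠ 0}) = 0 := by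
      have hsub : A ∩ {y : ℤ → V | y 0 ≠ 0} ⊆
          ⋃ n : ℕ, A ∩ {y : ℤ → V | ((n : ℝ) + 1)⁻¹ < ‖y 0‖} := by
        rintro x ⟨hxA, hx0⟩
        have hpos : 0 < ‖x 0‖ := norm_pos_iff.mpr hx0
        obtain ⟨n, hn⟩ := exists_nat_one_div_lt hpos
        rw [one_div] at hn
        exact mem_iUnion.mpr ⟨n, hxA, hn⟩
      refine measure_mono_null hsub (measure_iUnion_null fun n => h1 _ (by positivity))
    have h3 : ∀ j : ℤ, ν (A ∩ {y : ℤ → V | y j ≠ 0}) = 0 := by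
      intro j
      have hpre : backshift (-j) ⁻¹' (A ∩ {y : ℤ → V | y 0 ≠ 0})
          = A ∩ {y : ℤ → V | y j ≠ 0} := by
        ext x
        simp only [Set.mem_preimage, Set.mem_inter_iff, Set.mem_setOf_eq]
        constructor
        · rintro ⟨hA', h0'⟩
          refine ⟨(hAk (-j) x).mpr hA', ?_⟩
          simpa [backshift] using h0'
        · rintro ⟨hA', h0'⟩
          exact ⟨(hAk (-j) x).mp hA', by simpa [backshift] using h0'⟩
      calc ν (A ∩ {y : ℤ → V | y j ≠ 0})
          = ν (backshift (-j) ⁻¹' (A ∩ {y : ℤ → V | y 0 ≠ 0})) := by rw [hpre]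
        _ = (ν.map (backshift (-j))) (A ∩ {y : ℤ → V | y 0 ≠ 0}) :=
            (Measure.map_apply (backshift_meas _) (hAmeas.inter hZmeas)).symm
        _ = 0 := by rw [hmapk]; exact h2
    have hsub : A ⊆ {0} ∪ ⋃ j : ℤ, A ∩ {y : ℤ → V | y j ≠ 0} := by
      intro x hx
      by_cases hx0 : x = 0
      · exact Or.inl hx0
      · right
        obtain ⟨j, hj⟩ : ∃ j, x j ≠ 0 := by
          by_contra h
          push_neg at h
          exact hx0 (funext h)
        exact mem_iUnion.mpr ⟨j, hx, hj⟩
    refine measure_mono_null hsub ?_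
    refine measure_union_null hν0 (measure_iUnion_null h3)
  -- first equivalence
  have iff1 : ν A = 0 ↔ P (Y ⁻¹' A) = 0 := by
    rw [hPYA]
    exact ⟨fun h => measure_mono_null Set.inter_subset_left h, key⟩
  -- zero-infinity law
  have zi : ν A = 0 ∨ ν A = ∞ := by
    by_cases h0 : ν (A ∩ S) = 0
    · exact Or.inl (key h0)
    · right
      by_contra htop
      set m : ℝ≥0∞ := min (ν (A ∩ S)) 1 with hm
      have hm0 : m ≠ 0 := by
        simp only [hm, ne_eq, min_eq_iff]
        intro h
        rcases h with ⟨h, _⟩ | ⟨h, _⟩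
        · exact h0 h
        · exact one_ne_zero h
      have hmtop : m ≠ ∞ := ne_top_of_le_ne_top ENNReal.one_ne_top (min_le_right _ _)
      have hge : ∀ n : ℕ, ENNReal.ofReal (((n : ℝ) + 1) ^ α) * m ≤ ν A := by
        intro n
        have hc : (0 : ℝ) < ((n : ℝ) + 1)⁻¹ := by positivity
        have h1 := hscale _ hc
        have hval : (((n : ℝ) + 1)⁻¹) ^ (-α) = ((n : ℝ) + 1) ^ α := by
          rw [Real.inv_rpow (by positivity), Real.rpow_neg (by positivity), inv_inv]
        calc ENNReal.ofReal (((n : ℝ) + 1) ^ α) * m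
            ≤ ENNReal.ofReal (((n : ℝ) + 1) ^ α) * ν (A ∩ S) :=
              mul_le_mul_right (min_le_left _ _) _
          _ = ν (A ∩ {y : ℤ → V | ((n : ℝ) + 1)⁻¹ < ‖y 0‖}) := by rw [h1, hval]
          _ ≤ ν A := measure_mono Set.inter_subset_left
      have hdiv : ∀ n : ℕ, ENNReal.ofReal (((n : ℝ) + 1) ^ α) ≤ ν A / m := fun n =>
        (ENNReal.le_div_iff_mul_le (Or.inl hm0) (Or.inl hmtop)).mpr (hge n)
      have hdtop : ν A / m ≠ ∞ := (ENNReal.div_lt_top htop hm0).ne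
      have hreal : ∀ n : ℕ, ((n : ℝ) + 1) ^ α ≤ (ν A / m).toReal := by
        intro n
        exact (ENNReal.ofReal_le_iff_le_toReal hdtop).mp (hdiv n)
      have htt : Tendsto (fun n : ℕ => ((n : ℝ) + 1) ^ α) atTop atTop := by
        apply (tendsto_rpow_atTop hα).comp
        exact tendsto_atTop_add_const_right _ _ tendsto_natCast_atTop_atTop
      obtain ⟨n, hn⟩ := (htt.eventually_gt_atTop ((ν A / m).toReal)).exists
      exact absurd (hreal n) (not_le.mpr hn)
  -- second equivalence
  have hT1 : P {ω | 1 < ‖Y ω 0‖} = 1 := by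
    have := hPareto 1 le_rfl
    simpa [Real.one_rpow] using this
  have hTmeas : MeasurableSet {ω | 1 < ‖Y ω 0‖} :=
    measurableSet_lt measurable_const ((measurable_pi_apply 0).comp hYmeas).norm
  have hN0 : P {ω | 1 < ‖Y ω 0‖}ᶜ = 0 := by
    rw [measure_compl hTmeas (measure_ne_top _ _), hT1, measure_univ, tsub_self]
  have hiffω : ∀ ω, 1 < ‖Y ω 0‖ → (Y ω ∈ A ↔ Θ ω ∈ A) := by
    intro ω hω
    have hpos : 0 < ‖Y ω 0‖ := lt_trans zero_lt_one hω
    rw [hΘdef ω]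
    exact hAiff _ (inv_pos.mpr hpos) (Y ω)
  have hsub1 : Y ⁻¹' A ⊆ Θ ⁻¹' A ∪ {ω | 1 < ‖Y ω 0‖}ᶜ := by
    intro ω hω
    by_cases h : 1 < ‖Y ω 0‖
    · exact Or.inl ((hiffω ω h).mp hω)
    · exact Or.inr h
  have hsub2 : Θ ⁻¹' A ⊆ Y ⁻¹' A ∪ {ω | 1 < ‖Y ω 0‖}ᶜ := by
    intro ω hω
    by_cases h : 1 < ‖Y ω 0‖
    · exact Or.inl ((hiffω ω h).mpr hω)
    · exact Or.inr h
  have iff2 : P (Y ⁻¹' A) = 0 ↔ P (Θ ⁻¹' A) = 0 := by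
    constructor
    · intro h
      exact measure_mono_null hsub2 (measure_union_null h hN0)
    · intro h
      exact measure_mono_null hsub1 (measure_union_null h hN0)
  exact ⟨zi, iff1, iff2⟩
end
end

section
/- Assume P(I(Θ) ∈ ℤ) = 1 and P(‖Θ_j‖ = 0) = 0 for every j ∈ ℤ. Then for every nonnegative measurable function H on E, ∫_E H dν = ∫_0^∞ E[H(rΘ)] α r^{−α−1} dr. -/
open MeasureTheory ProbabilityTheory Set Filter
open scoped ENNReal NNReal Topology

noncomputable section

/-- `InfargmaxAt x j` is the event `I(x) = j` for the infargmax functional `I`: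
the first time the supremum of the norms is achieved is `j`, i.e.
`sup_{i<j} ‖x_i‖ < ‖x_j‖` and `sup_{i>j} ‖x_i‖ ≤ ‖x_j‖`.  (`I(x) ∈ ℤ` is then
expressed as `∃ j, InfargmaxAt x j`.) -/
def InfargmaxAt {V : Type*} [NormedAddCommGroup V] (x : ℤ → V) (j : ℤ) : Prop :=
  (⨆ i : {i : ℤ // i < j}, (‖x i.1‖₊ : ℝ≥0∞)) < (‖x j‖₊ : ℝ≥0∞) ∧
    (⨆ i : {i : ℤ // j < i}, (‖x i.1‖₊ : ℝ≥0∞)) ≤ (‖x j‖₊ : ℝ≥0∞)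

/-- **Recovering the tail measure directly from the spectral tail process.**
If `P(I(Θ) ∈ ℤ) = 1` and `P(‖Θ_j‖ = 0) = 0` for every `j ∈ ℤ`, then for every
nonnegative measurable `H` on `E`, `ν(H) = ∫_0^∞ E[H(rΘ)] α r^{−α−1} dr`. -/
theorem statement4
    -- `V` plays the role of `ℝ^d` (`d ≥ 1`) equipped with an arbitrary norm
    {V : Type*} [NormedAddCommGroup V] [NormedSpace ℝ V] [FiniteDimensional ℝ V]
    [Nontrivial V] [MeasurableSpace V] [BorelSpace V]
    (α : ℝ) (hα : 0 < α)
    -- the tail measure and its properties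
    (ν : Measure (ℤ → V))
    (hν0 : ν {0} = 0)
    (hν1 : ν {y : ℤ → V | 1 < ‖y 0‖} = 1)
    (hνshift : ν.map (backshift 1) = ν)
    (hνhom : ∀ A : Set (ℤ → V), MeasurableSet A → ∀ c : ℝ, 0 < c →
      ν ((fun x => c • x) '' A) = ENNReal.ofReal (c ^ (-α)) * ν A)
    -- the tail process `Y` and the spectral tail process `Θ`
    {Ω : Type*} [MeasurableSpace Ω] (P : Measure Ω) [IsProbabilityMeasure P]
    (Y : Ω → ℤ → V) (hYmeas : Measurable Y)
    (hYlaw : P.map Y = ν.restrict {y : ℤ → V | 1 < ‖y 0‖})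
    (Θ : Ω → ℤ → V) (hΘdef : ∀ ω, Θ ω = ‖Y ω 0‖⁻¹ • Y ω)
    (hPareto : ∀ u : ℝ, 1 ≤ u → P {ω | u < ‖Y ω 0‖} = ENNReal.ofReal (u ^ (-α)))
    (hindep : IndepFun (fun ω => ‖Y ω 0‖) Θ P)
    (hpolar : ∀ H : (ℤ → V) → ℝ≥0∞, Measurable H →
      ∫⁻ y in {y : ℤ → V | y 0 ≠ 0}, H y ∂ν
        = ∫⁻ r in Ioi (0 : ℝ),
            (∫⁻ ω, H (r • Θ ω) ∂P) * ENNReal.ofReal (α * r ^ (-α - 1)))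
    -- the statement
    (hI : P {ω | ∃ j : ℤ, InfargmaxAt (Θ ω) j} = 1)
    (hnz : ∀ j : ℤ, P {ω | ‖Θ ω j‖ = 0} = 0)
    (H : (ℤ → V) → ℝ≥0∞) (hH : Measurable H) :
    ∫⁻ y, H y ∂ν
      = ∫⁻ r in Ioi (0 : ℝ),
          (∫⁻ ω, H (r • Θ ω) ∂P) * ENNReal.ofReal (α * r ^ (-α - 1)) := by

  classical
  -- measurability of Θ
  have hΘmeas : Measurable Θ := by
    have hΘeq : Θ = fun ω => ‖Y ω 0‖⁻¹ • Y ω := funext hΘdef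
    rw [hΘeq]
    exact (((measurable_pi_apply 0).comp hYmeas).norm.inv).smul hYmeas
  -- measurability of backshifts
  have hmbs : ∀ k : ℤ, Measurable (backshift k : (ℤ → V) → (ℤ → V)) := fun k =>
    measurable_pi_lambda _ fun j => measurable_pi_apply (j - k)
  have hcomp : ∀ a b : ℤ, (backshift a : (ℤ → V) → (ℤ → V)) ∘ backshift b = backshift (a + b) := by
    intro a b
    funext x
    funext j
    simp [backshift, sub_sub]
  have hbs0 : (backshift 0 : (ℤ → V) → (ℤ → V)) = id := by
    funext x j; simp [backshift]
  -- shift invariance for all integer shifts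
  have hneg1 : ν.map (backshift (-1)) = ν := by
    have h := congrArg (Measure.map (backshift (-1) : (ℤ → V) → (ℤ → V))) hνshift
    rw [Measure.map_map (hmbs (-1)) (hmbs 1), hcomp, show (-1 : ℤ) + 1 = 0 by ring, hbs0,
      Measure.map_id] at h
    exact h.symm
  have hshift : ∀ k : ℤ, ν.map (backshift k) = ν := by
    intro k
    induction k using Int.induction_on with
    | zero => rw [hbs0, Measure.map_id]
    | succ n ih =>
        have he : (backshift ((n : ℤ) + 1) : (ℤ → V) → (ℤ → V)) = backshift 1 ∘ backshift n := by
          rw [hcomp]; ring_nf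
        rw [he, ← Measure.map_map (hmbs 1) (hmbs n), ih, hνshift]
    | pred n ih =>
        have he : (backshift (-(n : ℤ) - 1) : (ℤ → V) → (ℤ → V))
            = backshift (-1) ∘ backshift (-n) := by
          rw [hcomp]; ring_nf
        rw [he, ← Measure.map_map (hmbs (-1)) (hmbs (-n)), ih, hneg1]
  -- measurability of coordinate-zero sets
  have hmcoord : ∀ j : ℤ, MeasurableSet {y : ℤ → V | y j = 0} :=
    fun j => (measurable_pi_apply j) (measurableSet_singleton 0)
  -- for each j, ν {y | y 0 = 0 ∧ y j ≠ 0} = 0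
  have hkey : ∀ j : ℤ, ν {y : ℤ → V | y 0 = 0 ∧ y j ≠ 0} = 0 := by
    intro j
    -- shift the set so that the nonzero coordinate is 0
    have hset : {y : ℤ → V | y 0 = 0 ∧ y j ≠ 0}
        = backshift (-j) ⁻¹' {y : ℤ → V | y (-j) = 0 ∧ y 0 ≠ 0} := by
      ext y
      simp [backshift, sub_neg_eq_add]
    have hmeasA : MeasurableSet {y : ℤ → V | y (-j) = 0 ∧ y 0 ≠ 0} := by
      have : {y : ℤ → V | y (-j) = 0 ∧ y 0 ≠ 0}
          = {y : ℤ → V | y (-j) = 0} ∩ {y : ℤ → V | y 0 = 0}ᶜ := rfl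
      rw [this]
      exact (hmcoord (-j)).inter (hmcoord 0).compl
    have h1 : ν {y : ℤ → V | y 0 = 0 ∧ y j ≠ 0} = ν {y : ℤ → V | y (-j) = 0 ∧ y 0 ≠ 0} := by
      rw [hset, ← Measure.map_apply (hmbs (-j)) hmeasA, hshift (-j)]
    rw [h1]
    -- apply the polar decomposition to the indicator of {y | y (-j) = 0}
    set S : Set (ℤ → V) := {y : ℤ → V | y (-j) = 0} with hS
    have hpol := hpolar (S.indicator 1) ((measurable_one).indicator (hmcoord (-j)))
    have hL : ∫⁻ y in {y : ℤ → V | y 0 ≠ 0}, S.indicator 1 y ∂ν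
        = ν {y : ℤ → V | y (-j) = 0 ∧ y 0 ≠ 0} := by
      rw [lintegral_indicator (hmcoord (-j)), Measure.restrict_restrict (hmcoord (-j))]
      simp only [Pi.one_apply]
      rw [setLIntegral_one]
      congr 1
    have hR : ∫⁻ r in Ioi (0 : ℝ),
        (∫⁻ ω, S.indicator 1 (r • Θ ω) ∂P) * ENNReal.ofReal (α * r ^ (-α - 1)) = 0 := by
      have hz : ∀ r ∈ Ioi (0 : ℝ),
          (∫⁻ ω, S.indicator 1 (r • Θ ω) ∂P) * ENNReal.ofReal (α * r ^ (-α - 1)) = 0 := by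
        intro r hr
        have hr0 : r ≠ 0 := ne_of_gt hr
        have hind : ∀ ω, S.indicator 1 (r • Θ ω)
            = ({ω : Ω | Θ ω (-j) = 0}).indicator (1 : Ω → ℝ≥0∞) ω := by
          intro ω
          by_cases h : Θ ω (-j) = 0
          · have hmem : r • Θ ω ∈ S := by
              simp [hS, Pi.smul_apply, h]
            simp [indicator_of_mem hmem, indicator_of_mem (show ω ∈ {ω : Ω | Θ ω (-j) = 0} from h)]
          · have hmem : r • Θ ω ∉ S := by
              simp only [hS, mem_setOf_eq, Pi.smul_apply, smul_eq_zero]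
              push_neg
              exact ⟨hr0, h⟩
            simp [indicator_of_notMem hmem,
              indicator_of_notMem (show ω ∉ {ω : Ω | Θ ω (-j) = 0} from h)]
        have hmeasΩ : MeasurableSet {ω : Ω | Θ ω (-j) = 0} := by
          have : {ω : Ω | Θ ω (-j) = 0} = (fun ω => Θ ω (-j)) ⁻¹' {0} := rfl
          rw [this]
          exact ((measurable_pi_apply (-j)).comp hΘmeas) (measurableSet_singleton 0)
        have hP0 : P {ω : Ω | Θ ω (-j) = 0} = 0 := by
          have : {ω : Ω | Θ ω (-j) = 0} = {ω : Ω | ‖Θ ω (-j)‖ = 0} := by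
            ext ω; simp [norm_eq_zero]
          rw [this]
          exact hnz (-j)
        have : ∫⁻ ω, S.indicator 1 (r • Θ ω) ∂P = 0 := by
          calc ∫⁻ ω, S.indicator 1 (r • Θ ω) ∂P
              = ∫⁻ ω, ({ω : Ω | Θ ω (-j) = 0}).indicator (1 : Ω → ℝ≥0∞) ω ∂P := by
                exact lintegral_congr fun ω => hind ω
            _ = P {ω : Ω | Θ ω (-j) = 0} := lintegral_indicator_one hmeasΩ
            _ = 0 := hP0
        rw [this, zero_mul]
      rw [setLIntegral_congr_fun measurableSet_Ioi hz]
      simp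
    rw [← hL, hpol, hR]
  -- hence ν {y | y 0 = 0} = 0
  have hnull : ν {y : ℤ → V | y 0 = 0} = 0 := by
    have hsub : {y : ℤ → V | y 0 = 0}
        ⊆ {(0 : ℤ → V)} ∪ ⋃ j : ℤ, {y : ℤ → V | y 0 = 0 ∧ y j ≠ 0} := by
      intro y hy
      by_cases h : y = 0
      · exact Or.inl (by simp [h])
      · have : ∃ j, y j ≠ 0 := by
          by_contra hc
          push_neg at hc
          exact h (funext hc)
        obtain ⟨j, hj⟩ := this
        exact Or.inr (mem_iUnion.mpr ⟨j, ⟨hy, hj⟩⟩)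
    refine le_antisymm ?_ zero_le
    calc ν {y : ℤ → V | y 0 = 0}
        ≤ ν ({(0 : ℤ → V)} ∪ ⋃ j : ℤ, {y : ℤ → V | y 0 = 0 ∧ y j ≠ 0}) := measure_mono hsub
      _ ≤ ν {(0 : ℤ → V)} + ν (⋃ j : ℤ, {y : ℤ → V | y 0 = 0 ∧ y j ≠ 0}) := measure_union_le _ _
      _ ≤ 0 + ∑' j : ℤ, ν {y : ℤ → V | y 0 = 0 ∧ y j ≠ 0} := by
          rw [hν0]
          exact add_le_add le_rfl (measure_iUnion_le _)
      _ = 0 := by simp [hkey]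
  -- conclude
  have hrestr : ν.restrict {y : ℤ → V | y 0 ≠ 0} = ν := by
    have : {y : ℤ → V | y 0 ≠ 0} =ᶠ[ae ν] univ := by
      rw [ae_eq_univ]
      have : {y : ℤ → V | y 0 ≠ 0}ᶜ = {y : ℤ → V | y 0 = 0} := by
        ext y; simp
      rw [this]
      exact hnull
    rw [Measure.restrict_congr_set this, Measure.restrict_univ]
  rw [← hpolar H hH, hrestr]
end
end
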